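/- Let X1, X2, X3 be i.i.d. random elements of a metric space (X, d) and let x ∈ X satisfy D_{O3}(x) = 1, i.e., E[h(x, X1, X2, X3)] = 0. Then with probability one at least one of the events L(X1, x, X2), L(X2, x, X3), L(X3, x, X1) occurs, where L(a, b, c) denotes d(a, c) = d(a, b) + d(b, c). -/

import Mathlib

open MeasureTheory ProbabilityTheory

/-- The `3 × 3` matrix `B3(x, x1, x2, x3)` with `(k,ℓ)`-entry
`(1/2)(d(x,x_k)² + d(x,x_ℓ)² - d(x_k,x_ℓ)²)`. -/
noncomputable def B3 {X : Type*} [MetricSpace X] (x x1 x2 x3 : X) :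
    Matrix (Fin 3) (Fin 3) ℝ :=
  Matrix.of fun k ℓ =>
    (1 / 2) * (dist x (![x1, x2, x3] k) ^ 2 + dist x (![x1, x2, x3] ℓ) ^ 2
      - dist (![x1, x2, x3] k) (![x1, x2, x3] ℓ) ^ 2)

/-- The metric Oja depth kernel `h(x, x1, x2, x3)`. -/
noncomputable def ojaKernel {X : Type*} [MetricSpace X] (x x1 x2 x3 : X) : ℝ :=
  Real.sqrt ((B3 x x1 x2 x3).det +
    4 * dist x x1 ^ 2 * dist x x2 ^ 2 * dist x x3 ^ 2)

/-- `MBetween a b c` : `b` lies between `a` and `c`. -/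
def MBetween {X : Type*} [MetricSpace X] (a b c : X) : Prop :=
  dist a c = dist a b + dist b c

lemma oja_alg (a b c α β γ : ℝ) (hA : 0 < a) (hB : 0 < b) (hC : 0 < c)
    (hα1 : -(a*b) < α) (hα2 : α ≤ a*b)
    (hβ1 : -(b*c) < β) (hβ2 : β ≤ b*c)
    (hγ1 : -(c*a) < γ) (hγ2 : γ ≤ c*a) :
    0 < 5*a^2*b^2*c^2 - a^2*β^2 - b^2*γ^2 - c^2*α^2 + 2*α*β*γ := by
  nlinarith [mul_pos (mul_pos (by linarith : (0:ℝ) < a*b + α) (by linarith : (0:ℝ) < b*c + β)) (by linarith : (0:ℝ) < c*a + γ),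
    mul_nonneg (mul_nonneg (by linarith : (0:ℝ) ≤ a*b + α) (by linarith : (0:ℝ) ≤ b*c - β)) (by linarith : (0:ℝ) ≤ c*a - γ),
    mul_nonneg (mul_nonneg (by linarith : (0:ℝ) ≤ a*b - α) (by linarith : (0:ℝ) ≤ b*c + β)) (by linarith : (0:ℝ) ≤ c*a - γ),
    mul_nonneg (mul_nonneg (by linarith : (0:ℝ) ≤ a*b - α) (by linarith : (0:ℝ) ≤ b*c - β)) (by linarith : (0:ℝ) ≤ c*a + γ),
    mul_nonneg (sq_nonneg a) (mul_nonneg (by linarith : (0:ℝ) ≤ b*c - β) (by linarith : (0:ℝ) ≤ b*c + β)),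
    mul_nonneg (sq_nonneg b) (mul_nonneg (by linarith : (0:ℝ) ≤ c*a - γ) (by linarith : (0:ℝ) ≤ c*a + γ)),
    mul_nonneg (sq_nonneg c) (mul_nonneg (by linarith : (0:ℝ) ≤ a*b - α) (by linarith : (0:ℝ) ≤ a*b + α))]

lemma B3_det {X : Type*} [MetricSpace X] (x x1 x2 x3 : X) :
    (B3 x x1 x2 x3).det =
      (dist x x1)^2 * (dist x x2)^2 * (dist x x3)^2
      - (dist x x1)^2 * ((1/2) * ((dist x x2)^2 + (dist x x3)^2 - (dist x2 x3)^2))^2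
      - (dist x x2)^2 * ((1/2) * ((dist x x3)^2 + (dist x x1)^2 - (dist x3 x1)^2))^2
      - (dist x x3)^2 * ((1/2) * ((dist x x1)^2 + (dist x x2)^2 - (dist x1 x2)^2))^2
      + 2 * ((1/2) * ((dist x x1)^2 + (dist x x2)^2 - (dist x1 x2)^2))
          * ((1/2) * ((dist x x2)^2 + (dist x x3)^2 - (dist x2 x3)^2))
          * ((1/2) * ((dist x x3)^2 + (dist x x1)^2 - (dist x3 x1)^2)) := by
  simp only [B3, Matrix.det_fin_three, Matrix.of_apply, Matrix.cons_val',
    Matrix.cons_val_zero, Matrix.cons_val_one, Matrix.head_cons,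
    Matrix.empty_val', Matrix.cons_val_fin_one, Matrix.head_fin_const,
    Matrix.cons_val_two, Matrix.tail_cons, dist_self]
  simp only [dist_comm x2 x1, dist_comm x3 x2, dist_comm x1 x3]
  ring

lemma oja_key {X : Type*} [MetricSpace X] (x x1 x2 x3 : X)
    (h1 : ¬ MBetween x1 x x2) (h2 : ¬ MBetween x2 x x3) (h3 : ¬ MBetween x3 x x1) :
    0 < (B3 x x1 x2 x3).det +
      4 * dist x x1 ^ 2 * dist x x2 ^ 2 * dist x x3 ^ 2 := by
  have hA : 0 < dist x x1 := by
    rcases (dist_nonneg : 0 ≤ dist x x1).lt_or_eq with h | h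
    · exact h
    · exfalso; apply h1
      have hx : x = x1 := dist_eq_zero.mp h.symm
      simp [MBetween, ← hx, dist_comm x x2]
  have hB : 0 < dist x x2 := by
    rcases (dist_nonneg : 0 ≤ dist x x2).lt_or_eq with h | h
    · exact h
    · exfalso; apply h2
      have hx : x = x2 := dist_eq_zero.mp h.symm
      simp [MBetween, ← hx, dist_comm x x3]
  have hC : 0 < dist x x3 := by
    rcases (dist_nonneg : 0 ≤ dist x x3).lt_or_eq with h | h
    · exact h
    · exfalso; apply h3
      have hx : x = x3 := dist_eq_zero.mp h.symm
      simp [MBetween, ← hx, dist_comm x x1]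
  have hp1 : dist x1 x2 < dist x x1 + dist x x2 := by
    rcases (dist_triangle x1 x x2).lt_or_eq with h | h
    · rw [dist_comm x1 x] at h; exact h
    · exact absurd h h1
  have hq1 : dist x2 x3 < dist x x2 + dist x x3 := by
    rcases (dist_triangle x2 x x3).lt_or_eq with h | h
    · rw [dist_comm x2 x] at h; exact h
    · exact absurd h h2
  have hr1 : dist x3 x1 < dist x x3 + dist x x1 := by
    rcases (dist_triangle x3 x x1).lt_or_eq with h | h
    · rw [dist_comm x3 x] at h; exact h
    · exact absurd h h3
  have hp2 : dist x x1 ≤ dist x1 x2 + dist x x2 := by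
    calc dist x x1 ≤ dist x x2 + dist x2 x1 := dist_triangle x x2 x1
    _ = dist x1 x2 + dist x x2 := by rw [dist_comm x2 x1]; ring
  have hp3 : dist x x2 ≤ dist x1 x2 + dist x x1 := by
    calc dist x x2 ≤ dist x x1 + dist x1 x2 := dist_triangle x x1 x2
    _ = dist x1 x2 + dist x x1 := by ring
  have hq2 : dist x x2 ≤ dist x2 x3 + dist x x3 := by
    calc dist x x2 ≤ dist x x3 + dist x3 x2 := dist_triangle x x3 x2
    _ = dist x2 x3 + dist x x3 := by rw [dist_comm x3 x2]; ring
  have hq3 : dist x x3 ≤ dist x2 x3 + dist x x2 := by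
    calc dist x x3 ≤ dist x x2 + dist x2 x3 := dist_triangle x x2 x3
    _ = dist x2 x3 + dist x x2 := by ring
  have hr2 : dist x x3 ≤ dist x3 x1 + dist x x1 := by
    calc dist x x3 ≤ dist x x1 + dist x1 x3 := dist_triangle x x1 x3
    _ = dist x3 x1 + dist x x1 := by rw [dist_comm x1 x3]; ring
  have hr3 : dist x x1 ≤ dist x3 x1 + dist x x3 := by
    calc dist x x1 ≤ dist x x3 + dist x3 x1 := dist_triangle x x3 x1
    _ = dist x3 x1 + dist x x3 := by ring
  have hp0 : 0 ≤ dist x1 x2 := dist_nonneg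
  have hq0 : 0 ≤ dist x2 x3 := dist_nonneg
  have hr0 : 0 ≤ dist x3 x1 := dist_nonneg
  have key := oja_alg (dist x x1) (dist x x2) (dist x x3)
    ((1/2) * ((dist x x1)^2 + (dist x x2)^2 - (dist x1 x2)^2))
    ((1/2) * ((dist x x2)^2 + (dist x x3)^2 - (dist x2 x3)^2))
    ((1/2) * ((dist x x3)^2 + (dist x x1)^2 - (dist x3 x1)^2))
    hA hB hC
    (by nlinarith) (by nlinarith) (by nlinarith) (by nlinarith)
    (by nlinarith) (by nlinarith)
  rw [B3_det]
  nlinarith [key]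

theorem max_depth_implies_betweenness_as
    {Ω : Type*} [MeasurableSpace Ω] {M : Type*} [MetricSpace M]
    [MeasurableSpace M] [BorelSpace M]
    (μ : Measure Ω) [IsProbabilityMeasure μ]
    (Xs : Fin 3 → Ω → M) (hmeas : ∀ i, Measurable (Xs i))
    (hindep : iIndepFun Xs μ)
    (hident : ∀ i j, IdentDistrib (Xs i) (Xs j) μ μ)
    (x : M)
    (hint : Integrable (fun ω => ojaKernel x (Xs 0 ω) (Xs 1 ω) (Xs 2 ω)) μ)
    (hzero : ∫ ω, ojaKernel x (Xs 0 ω) (Xs 1 ω) (Xs 2 ω) ∂μ = 0) :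
    ∀ᵐ ω ∂μ, MBetween (Xs 0 ω) x (Xs 1 ω) ∨ MBetween (Xs 1 ω) x (Xs 2 ω) ∨
      MBetween (Xs 2 ω) x (Xs 0 ω) := by
  have hnn : 0 ≤ᵐ[μ] fun ω => ojaKernel x (Xs 0 ω) (Xs 1 ω) (Xs 2 ω) :=
    Filter.Eventually.of_forall fun ω => Real.sqrt_nonneg _
  have hae : (fun ω => ojaKernel x (Xs 0 ω) (Xs 1 ω) (Xs 2 ω)) =ᵐ[μ] 0 :=
    (integral_eq_zero_iff_of_nonneg_ae hnn hint).mp hzero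
  filter_upwards [hae] with ω hω
  by_contra hcon
  push_neg at hcon
  obtain ⟨h1, h2, h3⟩ := hcon
  have hpos := oja_key x (Xs 0 ω) (Xs 1 ω) (Xs 2 ω) h1 h2 h3
  have hlt : 0 < ojaKernel x (Xs 0 ω) (Xs 1 ω) (Xs 2 ω) := Real.sqrt_pos.mpr hpos
  have hz : ojaKernel x (Xs 0 ω) (Xs 1 ω) (Xs 2 ω) = 0 := hω
  exact hlt.ne' hz
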